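/- Let G be a locally compact Hausdorff topological group and let (Γₙ) be a uniformly discrete sequence of cocompact lattices in G. Then the following are equivalent: (a) (Γₙ) is BS-convergent to {1}, i.e., for every compact set C ⊆ G, P_{Γₙ\G}({x ∈ Γₙ\G : x⁻¹Γₙ* x ∩ C ≠ ∅}) → 0 as n → ∞; (b) for every compact set C ⊆ G, ∫_{Γₙ\G} #(x⁻¹Γₙ* x ∩ C) dP_{Γₙ\G}(x) → 0 as n → ∞ (the condition characterizing (Γₙ) being a Plancherel sequence). -/

import Mathlib

open MeasureTheory Filter Topology
open scoped ENNReal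

open Set Pointwise
open scoped ENNReal

/-- Uniform bound on the number of points of a `U`-separated conjugated subgroup
in a compact set. -/
lemma cardBound {G : Type*} [Group G] [TopologicalSpace G] [IsTopologicalGroup G]
    {U : Set G} (hU : U ∈ nhds 1) {D : Set G} (hD : IsCompact D) :
    ∃ N : ℕ, ∀ (H : Subgroup G) (x : G),
      ((fun γ => x⁻¹ * γ * x) '' (H : Set G)) ∩ U = {1} →
      (((fun γ => x⁻¹ * γ * x) '' (H : Set G)) ∩ D).encard ≤ N := by
  obtain ⟨V, hVopen, hV1, hVU⟩ := exists_open_nhds_one_mul_subset hU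
  set W : Set G := V ∩ V⁻¹ with hW
  have hWopen : IsOpen W := hVopen.inter (hVopen.preimage continuous_inv)
  have hW1 : (1 : G) ∈ W := ⟨hV1, by simpa using hV1⟩
  -- the cover
  set O : G → Set G := fun g => (fun y => g⁻¹ * y) ⁻¹' W with hO
  have hOopen : ∀ g, IsOpen (O g) := fun g =>
    hWopen.preimage (continuous_const.mul continuous_id)
  have hOmem : ∀ g, g ∈ O g := fun g => by simp [hO, hW1]
  obtain ⟨t, -, htcov⟩ := hD.elim_nhds_subcover O (fun g _ => (hOopen g).mem_nhds (hOmem g))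
  refine ⟨t.card, fun H x hsep => ?_⟩
  set S := ((fun γ => x⁻¹ * γ * x) '' (H : Set G)) ∩ D with hS
  classical
  set f : G → G := fun a => if h : ∃ g ∈ t, a ∈ O g then h.choose else 1 with hf
  have hfspec : ∀ a ∈ S, f a ∈ t ∧ a ∈ O (f a) := by
    intro a ha
    have hex : ∃ g ∈ t, a ∈ O g := by
      have := htcov ha.2
      simpa using this
    simp only [hf, dif_pos hex]
    exact ⟨hex.choose_spec.1, hex.choose_spec.2⟩
  have hinj : InjOn f S := by
    intro a ha b hb hab
    obtain ⟨hat, haO⟩ := hfspec a ha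
    obtain ⟨hbt, hbO⟩ := hfspec b hb
    rw [hab] at haO
    -- a⁻¹ * b ∈ U
    have h1 : (f b)⁻¹ * a ∈ W := haO
    have h2 : (f b)⁻¹ * b ∈ W := hbO
    have hU' : a⁻¹ * b ∈ U := by
      have : a⁻¹ * b = ((f b)⁻¹ * a)⁻¹ * ((f b)⁻¹ * b) := by group
      rw [this]
      exact hVU (Set.mul_mem_mul (by simpa using h1.2) h2.1)
    -- a⁻¹ * b is in the conjugated subgroup
    obtain ⟨γ, hγ, rfl⟩ := ha.1
    obtain ⟨δ, hδ, rfl⟩ := hb.1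
    have hmem : (x⁻¹ * γ * x)⁻¹ * (x⁻¹ * δ * x)
        ∈ (fun γ => x⁻¹ * γ * x) '' (H : Set G) := by
      refine ⟨γ⁻¹ * δ, mul_mem (inv_mem hγ) hδ, ?_⟩
      group
    have : (x⁻¹ * γ * x)⁻¹ * (x⁻¹ * δ * x) = 1 := by
      have := hsep ▸ (Set.mem_inter hmem hU')
      simpa using this
    have := inv_mul_eq_one.mp this
    simpa using this
  have himg : f '' S ⊆ (t : Set G) := by
    rintro _ ⟨a, ha, rfl⟩
    exact (hfspec a ha).1
  calc S.encard = (f '' S).encard := (hinj.encard_image).symm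
    _ ≤ (t : Set G).encard := Set.encard_mono himg
    _ = t.card := Set.encard_coe_eq_coe_finsetCard t

/-- The conjugated punctured-lattice set only depends on the right coset. -/
lemma conjSet_subset {G : Type*} [Group G] (Γ : Subgroup G) {x y : G} (h : y * x⁻¹ ∈ Γ) :
    (fun γ => y⁻¹ * γ * y) '' ((Γ : Set G) \ {1})
      ⊆ (fun γ => x⁻¹ * γ * x) '' ((Γ : Set G) \ {1}) := by
  rintro _ ⟨δ, ⟨hδΓ, hδ1⟩, rfl⟩
  refine ⟨(y * x⁻¹)⁻¹ * δ * (y * x⁻¹), ⟨mul_mem (mul_mem (inv_mem h) hδΓ) h, ?_⟩, by group⟩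
  simp only [Set.mem_singleton_iff] at hδ1 ⊢
  intro hc
  apply hδ1
  have : δ = (y * x⁻¹) * ((y * x⁻¹)⁻¹ * δ * (y * x⁻¹)) * (y * x⁻¹)⁻¹ := by group
  rw [this, hc]; group

lemma conjSet_eq {G : Type*} [Group G] (Γ : Subgroup G) {x y : G} (h : y * x⁻¹ ∈ Γ) :
    (fun γ => y⁻¹ * γ * y) '' ((Γ : Set G) \ {1})
      = (fun γ => x⁻¹ * γ * x) '' ((Γ : Set G) \ {1}) := by
  refine Set.Subset.antisymm (conjSet_subset Γ h) (conjSet_subset Γ ?_)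
  simpa using inv_mem h

/-- The "bad set" upstairs is closed. -/
lemma badSet_closed {G : Type*} [Group G] [TopologicalSpace G] [IsTopologicalGroup G]
    [LocallyCompactSpace G] [T2Space G]
    {U : Set G} (hU : U ∈ nhds 1) (Γ : Subgroup G)
    (hsep : ∀ x : G, ((fun γ => x⁻¹ * γ * x) '' (Γ : Set G)) ∩ U = {1})
    {C : Set G} (hC : IsCompact C) :
    IsClosed {x : G | (((fun γ => x⁻¹ * γ * x) '' ((Γ : Set G) \ {1})) ∩ C).Nonempty} := by
  rw [← isOpen_compl_iff, isOpen_iff_mem_nhds]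
  intro x₀ hx₀
  obtain ⟨K, hKc, hKn⟩ := exists_compact_mem_nhds x₀
  have hDc : IsCompact (K * C * K⁻¹) := (hKc.mul hC).mul hKc.inv
  obtain ⟨N, hN⟩ := cardBound hU hDc
  have himg1 : (fun γ => (1:G)⁻¹ * γ * 1) '' (Γ : Set G) = (Γ : Set G) := by simp
  have hΦfin : ((Γ : Set G) ∩ (K * C * K⁻¹)).Finite := by
    rw [← Set.encard_lt_top_iff]
    calc ((Γ : Set G) ∩ (K * C * K⁻¹)).encard
        = (((fun γ => (1:G)⁻¹ * γ * 1) '' (Γ : Set G)) ∩ (K * C * K⁻¹)).encard := by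
          rw [himg1]
      _ ≤ N := hN Γ 1 (by simpa [himg1] using hsep 1)
      _ < ⊤ := by simp
  set Φ : Set G := ((Γ : Set G) ∩ (K * C * K⁻¹)) \ {1} with hΦ
  have hΦfin2 : Φ.Finite := hΦfin.diff
  set N₀ : Set G := interior K ∩ ⋂ γ ∈ Φ, {x : G | x⁻¹ * γ * x ∉ C} with hN₀
  have hopen : IsOpen N₀ := by
    refine isOpen_interior.inter (hΦfin2.isOpen_biInter fun γ _ => ?_)
    have : IsOpen ({x : G | x⁻¹ * γ * x ∈ C})ᶜ :=
      (hC.isClosed.preimage (by continuity)).isOpen_compl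
    exact this
  have hmem : x₀ ∈ N₀ := by
    refine ⟨mem_interior_iff_mem_nhds.mpr hKn, ?_⟩
    simp only [Set.mem_iInter]
    intro γ hγ hcon
    exact hx₀ ⟨x₀⁻¹ * γ * x₀, ⟨⟨γ, ⟨hγ.1.1, hγ.2⟩, rfl⟩, hcon⟩⟩
  rw [mem_nhds_iff]
  refine ⟨N₀, fun x hx => ?_, hopen, hmem⟩
  rintro ⟨a, ⟨⟨δ, ⟨hδΓ, hδ1⟩, rfl⟩, haC⟩⟩
  have hxK : x ∈ K := interior_subset hx.1
  have hδD : δ ∈ K * C * K⁻¹ := by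
    have : δ = x * (x⁻¹ * δ * x) * x⁻¹ := by group
    rw [this]
    exact Set.mul_mem_mul (Set.mul_mem_mul hxK haC) (Set.inv_mem_inv.mpr hxK)
  have hδΦ : δ ∈ Φ := ⟨⟨hδΓ, hδD⟩, hδ1⟩
  have := hx.2
  simp only [Set.mem_iInter] at this
  exact this δ hδΦ haC

/-- Right translation by `g ∈ G` on the right coset space `Γ\G`. -/
def rightTranslate {G : Type*} [Group G] (Γ : Subgroup G) (g : G) :
    Quotient (QuotientGroup.rightRel Γ) → Quotient (QuotientGroup.rightRel Γ) :=
  Quotient.map' (fun x => x * g) (by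
    intro a b h
    rw [QuotientGroup.rightRel_apply] at h ⊢
    have e : (b * g) * (a * g)⁻¹ = b * a⁻¹ := by group
    rw [e]; exact h)

/-- Theorem of Section 2.  Let `G` be a locally compact Hausdorff
topological group, `(Γₙ)` a uniformly discrete sequence of cocompact lattices, and
`P n` the invariant Borel probability measure on `Γₙ\G`.  Then `(Γₙ)` is BS-convergent
to `{1}` (condition (a)) iff for every compact `C ⊆ G` the integrals
`∫_{Γₙ\G} #(x⁻¹Γₙ* x ∩ C) dP_{Γₙ\G}(x)` tend to `0` (condition (b), characterizing
Plancherel sequences). -/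
theorem stmt2 {G : Type*} [Group G] [TopologicalSpace G] [IsTopologicalGroup G]
    [LocallyCompactSpace G] [T2Space G] [MeasurableSpace G] [BorelSpace G]
    (Γ : ℕ → Subgroup G)
    (hdisc : ∀ n, DiscreteTopology ↥(Γ n))
    (hcocpt : ∀ n, CompactSpace (Quotient (QuotientGroup.rightRel (Γ n))))
    (hud : ∃ U ∈ nhds (1 : G), ∀ (n : ℕ) (x : G),
      ((fun γ => x⁻¹ * γ * x) '' ((Γ n : Set G))) ∩ U = {1})
    (P : ∀ n : ℕ, Measure (Quotient (QuotientGroup.rightRel (Γ n))))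
    (hP : ∀ n, IsProbabilityMeasure (P n))
    (hPinv : ∀ (n : ℕ) (g : G), MeasurePreserving (rightTranslate (Γ n) g) (P n) (P n)) :
    (∀ C : Set G, IsCompact C →
      Tendsto (fun n => P n {q | ∃ x : G, Quotient.mk'' x = q ∧
          (((fun γ => x⁻¹ * γ * x) '' ((Γ n : Set G) \ {1})) ∩ C).Nonempty})
        atTop (𝓝 0))
    ↔
    (∀ C : Set G, IsCompact C →
      ∀ F : (n : ℕ) → Quotient (QuotientGroup.rightRel (Γ n)) → ℝ≥0∞,
        (∀ (n : ℕ) (x : G), F n (Quotient.mk'' x) =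
          ((((fun γ => x⁻¹ * γ * x) '' ((Γ n : Set G) \ {1})) ∩ C).encard : ℝ≥0∞)) →
        Tendsto (fun n => ∫⁻ q, F n q ∂(P n)) atTop (𝓝 0)) := by
  obtain ⟨U, hU, hsep⟩ := hud
  constructor
  · -- (a) → (b)
    intro h C hC F hF
    obtain ⟨N, hN⟩ := cardBound hU hC
    set Sset : ∀ n, Set (Quotient (QuotientGroup.rightRel (Γ n))) :=
      fun n => {q | ∃ x : G, Quotient.mk'' x = q ∧
          (((fun γ => x⁻¹ * γ * x) '' ((Γ n : Set G) \ {1})) ∩ C).Nonempty} with hSset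
    have hb : ∀ n q, F n q ≤ (Sset n).indicator (fun _ => (N : ℝ≥0∞)) q := by
      intro n q
      induction q using Quotient.inductionOn' with
      | h x =>
        rw [hF n x]
        rcases Set.eq_empty_or_nonempty
            (((fun γ => x⁻¹ * γ * x) '' ((Γ n : Set G) \ {1})) ∩ C) with he | hne
        · simp [he]
        · have hq : Quotient.mk'' x ∈ Sset n := ⟨x, rfl, hne⟩
          rw [Set.indicator_of_mem hq]
          have hsub : (((fun γ => x⁻¹ * γ * x) '' ((Γ n : Set G) \ {1})) ∩ C).encard
              ≤ (((fun γ => x⁻¹ * γ * x) '' ((Γ n : Set G))) ∩ C).encard :=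
            Set.encard_mono (Set.inter_subset_inter_left _
              (Set.image_mono Set.diff_subset))
          have := hsub.trans (hN (Γ n) x (hsep n x))
          exact_mod_cast this
    have hint : ∀ n, ∫⁻ q, F n q ∂(P n) ≤ N * P n (Sset n) := fun n =>
      (lintegral_mono (hb n)).trans (lintegral_indicator_const_le _ _)
    refine tendsto_of_tendsto_of_tendsto_of_le_of_le tendsto_const_nhds ?_
      (fun n => zero_le) hint
    have := ENNReal.Tendsto.const_mul (h C hC) (Or.inr (ENNReal.natCast_ne_top N))
    rw [mul_zero] at this
    exact this
  · -- (b) → (a)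
    intro h C hC
    set F : ∀ n : ℕ, Quotient (QuotientGroup.rightRel (Γ n)) → ℝ≥0∞ :=
      fun n q => Quotient.liftOn' q
        (fun x => ((((fun γ => x⁻¹ * γ * x) '' ((Γ n : Set G) \ {1})) ∩ C).encard : ℝ≥0∞))
        (fun a b hab => by
          rw [QuotientGroup.rightRel_apply] at hab
          exact congrArg (fun s => ((s ∩ C).encard : ℝ≥0∞)) (conjSet_eq (Γ n) hab).symm)
        with hFdef
    have hF : ∀ (n : ℕ) (x : G), F n (Quotient.mk'' x) =
        ((((fun γ => x⁻¹ * γ * x) '' ((Γ n : Set G) \ {1})) ∩ C).encard : ℝ≥0∞) :=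
      fun n x => rfl
    have htend := h C hC F hF
    set Sset : ∀ n, Set (Quotient (QuotientGroup.rightRel (Γ n))) :=
      fun n => {q | ∃ x : G, Quotient.mk'' x = q ∧
          (((fun γ => x⁻¹ * γ * x) '' ((Γ n : Set G) \ {1})) ∩ C).Nonempty} with hSset
    have hpre : ∀ n, Quotient.mk'' ⁻¹' (Sset n)
        = {x : G | (((fun γ => x⁻¹ * γ * x) '' ((Γ n : Set G) \ {1})) ∩ C).Nonempty} := by
      intro n
      ext x
      constructor
      · rintro ⟨y, hy, hne⟩
        have hrel : x * y⁻¹ ∈ Γ n := by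
          rw [← QuotientGroup.rightRel_apply]
          exact Quotient.eq''.mp hy
        simp only [Set.mem_setOf_eq]
        rwa [conjSet_eq (Γ n) hrel]
      · intro hne
        exact ⟨x, rfl, hne⟩
    have hSm : ∀ n, MeasurableSet (Sset n) := by
      intro n
      rw [measurableSet_quotient, hpre n]
      exact (badSet_closed hU (Γ n) (hsep n) hC).measurableSet
    have hle : ∀ n, P n (Sset n) ≤ ∫⁻ q, F n q ∂(P n) := by
      intro n
      have h1 : P n (Sset n)
          = ∫⁻ q, (Sset n).indicator (fun _ => (1 : ℝ≥0∞)) q ∂(P n) := by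
        rw [lintegral_indicator_const (hSm n), one_mul]
      rw [h1]
      refine lintegral_mono fun q => ?_
      by_cases hq : q ∈ Sset n
      · rw [Set.indicator_of_mem hq]
        obtain ⟨x, hx, hne⟩ := hq
        rw [← hx, hF n x]
        have h1 : 1 ≤ (((fun γ => x⁻¹ * γ * x) '' ((Γ n : Set G) \ {1})) ∩ C).encard :=
          Set.one_le_encard_iff_nonempty.mpr hne
        calc (1:ℝ≥0∞) = ((1 : ℕ∞) : ℝ≥0∞) := by simp
          _ ≤ _ := ENat.toENNReal_le.mpr h1
      · rw [Set.indicator_of_notMem hq]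
        exact zero_le
    refine tendsto_of_tendsto_of_tendsto_of_le_of_le tendsto_const_nhds htend
      (fun n => zero_le) hle
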